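/- Let P = (p₁,p₂,p₃), Q = (q₁,q₂,q₃) be primitive vectors in ℤ³ spanning a 2-dimensional cone, with d := gcd of the minors of (P,Q) > 1, and let Q₀ = Q, Q₁,…,Q_k, Q_{k+1} = P be the canonical subdivision. Writing Q_i = (β_iP + α_iQ)/d with α₀ = d, β₀ = 0, α_{k+1} = 0, β_{k+1} = d, the sequences satisfy α_i > α_{i+1} and β_i < β_{i+1} for 0 ≤ i ≤ k, and all α_i, β_i for 1 ≤ i ≤ k are positive integers strictly less than d. -/

import Mathlib

/-- gcd of the absolute values of the three 2×2 minors of the 3×2 matrix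
whose columns are `P` and `Q`. -/
def mg3 (P Q : ℤ × ℤ × ℤ) : ℕ :=
  Int.gcd (P.1 * Q.2.1 - P.2.1 * Q.1)
    (Int.gcd (P.1 * Q.2.2 - P.2.2 * Q.1) (P.2.1 * Q.2.2 - P.2.2 * Q.2.1))

private def cr (U W : ℤ × ℤ × ℤ) : ℤ × ℤ × ℤ :=
  (U.1 * W.2.1 - U.2.1 * W.1, U.1 * W.2.2 - U.2.2 * W.1, U.2.1 * W.2.2 - U.2.2 * W.2.1)

private def gT (X : ℤ × ℤ × ℤ) : ℕ := Int.gcd X.1 (Int.gcd X.2.1 X.2.2)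

private lemma mg3_eq (U W : ℤ × ℤ × ℤ) : mg3 U W = gT (cr U W) := rfl

private lemma sm1 (a : ℤ) (X : ℤ × ℤ × ℤ) : (a • X).1 = a * X.1 := rfl
private lemma sm2 (a : ℤ) (X : ℤ × ℤ × ℤ) : (a • X).2.1 = a * X.2.1 := rfl
private lemma sm3 (a : ℤ) (X : ℤ × ℤ × ℤ) : (a • X).2.2 = a * X.2.2 := rfl
private lemma ad1 (X Y : ℤ × ℤ × ℤ) : (X + Y).1 = X.1 + Y.1 := rfl
private lemma ad2 (X Y : ℤ × ℤ × ℤ) : (X + Y).2.1 = X.2.1 + Y.2.1 := rfl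
private lemma ad3 (X Y : ℤ × ℤ × ℤ) : (X + Y).2.2 = X.2.2 + Y.2.2 := rfl
private lemma cr1 (U W : ℤ × ℤ × ℤ) : (cr U W).1 = U.1 * W.2.1 - U.2.1 * W.1 := rfl
private lemma cr2 (U W : ℤ × ℤ × ℤ) : (cr U W).2.1 = U.1 * W.2.2 - U.2.2 * W.1 := rfl
private lemma cr3 (U W : ℤ × ℤ × ℤ) : (cr U W).2.2 = U.2.1 * W.2.2 - U.2.2 * W.2.1 := rfl

private lemma teq {X Y : ℤ × ℤ × ℤ} (h1 : X.1 = Y.1) (h2 : X.2.1 = Y.2.1)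
    (h3 : X.2.2 = Y.2.2) : X = Y := by
  obtain ⟨x1, x2, x3⟩ := X; obtain ⟨y1, y2, y3⟩ := Y
  simp_all

private lemma comps {X Y : ℤ × ℤ × ℤ} (h : X = Y) :
    X.1 = Y.1 ∧ X.2.1 = Y.2.1 ∧ X.2.2 = Y.2.2 := by subst h; exact ⟨rfl, rfl, rfl⟩

private lemma gT_smul (a : ℤ) (X : ℤ × ℤ × ℤ) : gT (a • X) = a.natAbs * gT X := by
  obtain ⟨x, y, z⟩ := X
  show Int.gcd (a * x) (Int.gcd (a * y) (a * z) : ℕ) = a.natAbs * Int.gcd x (Int.gcd y z : ℕ)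
  rw [Int.gcd_mul_left]
  unfold Int.gcd
  simp [Int.natAbs_mul, Int.natAbs_abs, Nat.gcd_mul_left]

private lemma dvd_gT {a : ℤ} {X : ℤ × ℤ × ℤ} (h1 : a ∣ X.1) (h2 : a ∣ X.2.1)
    (h3 : a ∣ X.2.2) : a ∣ (gT X : ℤ) := Int.dvd_coe_gcd h1 (Int.dvd_coe_gcd h2 h3)

private lemma gT_swap (U W : ℤ × ℤ × ℤ) : gT (cr U W) = gT (cr W U) := by
  have h : cr W U = (-1 : ℤ) • cr U W := by
    refine teq ?_ ?_ ?_ <;> simp only [cr1, cr2, cr3, sm1, sm2, sm3] <;> ring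
  rw [h, gT_smul]; simp

private lemma gT_eq_of_smul {a b : ℤ} {X Y : ℤ × ℤ × ℤ} (ha : 0 ≤ a) (hb : 0 ≤ b)
    (h : a • X = b • Y) : a * (gT X : ℤ) = b * (gT Y : ℤ) := by
  have h2 := congrArg gT h
  rw [gT_smul, gT_smul] at h2
  have h3 : (a.natAbs : ℤ) * (gT X : ℤ) = (b.natAbs : ℤ) * (gT Y : ℤ) := by exact_mod_cast h2
  rwa [Int.natAbs_of_nonneg ha, Int.natAbs_of_nonneg hb] at h3

private def seqF (d : ℤ) (E : ℕ → ℤ) (k : ℕ) : ℕ → ℤ × ℤ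
  | 0 => (d, 0)
  | n+1 => if n < k then
      (E n, (d + E n * (seqF d E k n).2) / (seqF d E k n).1)
    else if n = k then (0, d) else (0, 0)

set_option maxHeartbeats 1600000 in
theorem stmt18 (P Q : ℤ × ℤ × ℤ)
    (hP : Int.gcd P.1 (Int.gcd P.2.1 P.2.2) = 1)
    (hQ : Int.gcd Q.1 (Int.gcd Q.2.1 Q.2.2) = 1)
    (d : ℤ) (hd : d = (mg3 P Q : ℤ)) (hd1 : 1 < d)
    (k : ℕ) (V : ℕ → ℤ × ℤ × ℤ) (hV0 : V 0 = Q) (hVend : V (k+1) = P)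
    -- `V` is the canonical subdivision: at each step, with `dᵢ = det(P, V i) > 1`,
    -- `V (i+1) = (P + e • V i) / dᵢ` for the (unique) integer `1 ≤ e < dᵢ`
    (hstep : ∀ i < k, 1 < (mg3 P (V i) : ℤ) ∧
      ∃ e : ℤ, 1 ≤ e ∧ e < (mg3 P (V i) : ℤ) ∧
        (mg3 P (V i) : ℤ) • V (i+1) = P + e • V i)
    (hend : mg3 P (V k) = 1) :
    ∃ α β : ℕ → ℤ,
      α 0 = d ∧ β 0 = 0 ∧ α (k+1) = 0 ∧ β (k+1) = d ∧
      (∀ i : ℕ, 1 ≤ i → i ≤ k →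
        0 < α i ∧ α i < d ∧ 0 < β i ∧ β i < d ∧
        d • V i = β i • P + α i • Q) ∧
      (∀ i : ℕ, i ≤ k → α (i+1) < α i ∧ β i < β (i+1)) := by
  classical
  obtain ⟨E, hE⟩ : ∃ E : ℕ → ℤ, ∀ n, n < k → 1 ≤ E n ∧ E n < (mg3 P (V n) : ℤ) ∧
      (mg3 P (V n) : ℤ) • V (n+1) = P + E n • V n :=
    ⟨fun n => if h : n < k then ((hstep n h).2).choose else 0, fun n h => by
      simp only [dif_pos h]; exact ((hstep n h).2).choose_spec⟩
  have hFs : ∀ n, n < k → seqF d E k (n+1) =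
      (E n, (d + E n * (seqF d E k n).2) / (seqF d E k n).1) := by
    intro n h; simp [seqF, h]
  have hFk : seqF d E k (k+1) = (0, d) := by simp [seqF]
  have hPQ : (gT (cr P Q) : ℤ) = d := by rw [← mg3_eq]; exact hd.symm
  have hQP : (gT (cr Q P) : ℤ) = d := by rw [← gT_swap]; exact hPQ
  have main : ∀ i, i ≤ k →
      d • V i = (seqF d E k i).2 • P + (seqF d E k i).1 • Q ∧
      (seqF d E k i).1 = (mg3 P (V i) : ℤ) ∧
      0 < (seqF d E k i).1 ∧ 0 ≤ (seqF d E k i).2 ∧ (seqF d E k i).2 < d ∧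
      (1 ≤ i →
        (seqF d E k i).1 < d ∧ 0 < (seqF d E k i).2 ∧
        (seqF d E k (i-1)).2 < (seqF d E k i).2 ∧
        (seqF d E k i).1 < (seqF d E k (i-1)).1 ∧
        (seqF d E k (i-1)).1 • V i = P + (seqF d E k i).1 • V (i-1) ∧
        (seqF d E k (i-1)).1 * (seqF d E k i).2
          = d + (seqF d E k i).1 * (seqF d E k (i-1)).2 ∧
        gT (cr (V (i-1)) (V i)) = 1) := by
    intro i
    induction i with
    | zero =>
      intro _
      have h0 : seqF d E k 0 = (d, 0) := rfl
      simp only [h0]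
      refine ⟨?_, ?_, by linarith, le_refl 0, by linarith, by omega⟩
      · rw [hV0, zero_smul, zero_add]
      · rw [hV0]; exact hd
    | succ i ih =>
      intro hik1
      have hik : i < k := hik1
      obtain ⟨IH1, IH2, IH3, IH4, IH5, IH6⟩ := ih (le_of_lt hik)
      obtain ⟨he1, he2, he3⟩ := hE i hik
      simp only [Nat.add_sub_cancel, hFs i hik] at *
      set a := (seqF d E k i).1 with ha_def
      set b := (seqF d E k i).2 with hb_def
      set e := E i with he_def
      rw [← IH2] at he2 he3
      have ha0 : (0:ℤ) < a := IH3
      have ha1 : 1 < a := lt_of_le_of_lt he1 he2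
      -- the key combined vector equation
      obtain ⟨s1, s2, s3⟩ := comps he3
      obtain ⟨t1, t2, t3⟩ := comps IH1
      simp only [sm1, sm2, sm3, ad1, ad2, ad3] at s1 s2 s3 t1 t2 t3
      have hstar : (d * a) • V (i+1) = (d + e * b) • P + (e * a) • Q := by
        refine teq ?_ ?_ ?_ <;> simp only [sm1, sm2, sm3, ad1, ad2, ad3]
        · linear_combination d * s1 + e * t1
        · linear_combination d * s2 + e * t2
        · linear_combination d * s3 + e * t3
      obtain ⟨r1, r2, r3⟩ := comps hstar
      simp only [sm1, sm2, sm3, ad1, ad2, ad3] at r1 r2 r3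
      -- divisibility via minors with Q
      have hcrQ : (d * a) • cr Q (V (i+1)) = (d + e * b) • cr Q P := by
        refine teq ?_ ?_ ?_ <;> simp only [cr1, cr2, cr3, sm1, sm2, sm3]
        · linear_combination Q.1 * r2 - Q.2.1 * r1
        · linear_combination Q.1 * r3 - Q.2.2 * r1
        · linear_combination Q.2.1 * r3 - Q.2.2 * r2
      have heb : (0:ℤ) ≤ e * b := mul_nonneg (by linarith) IH4
      have hkey := gT_eq_of_smul (mul_nonneg (by linarith) ha0.le) (by linarith) hcrQ
      rw [hQP] at hkey
      have hag : a * (gT (cr Q (V (i+1))) : ℤ) = d + e * b := by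
        have hd0 : d ≠ 0 := by linarith
        apply mul_left_cancel₀ hd0
        linear_combination hkey
      have hdvd : a ∣ d + e * b := ⟨_, hag.symm⟩
      have hb'a : (d + e * b) / a * a = d + e * b := Int.ediv_mul_cancel hdvd
      set b' := (d + e * b) / a with hb'_def
      -- mg3 of the next vector
      have hcrP : (d * a) • cr P (V (i+1)) = (e * a) • cr P Q := by
        refine teq ?_ ?_ ?_ <;> simp only [cr1, cr2, cr3, sm1, sm2, sm3]
        · linear_combination P.1 * r2 - P.2.1 * r1
        · linear_combination P.1 * r3 - P.2.2 * r1
        · linear_combination P.2.1 * r3 - P.2.2 * r2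
      have hkey2 := gT_eq_of_smul (mul_nonneg (by linarith) ha0.le) (mul_nonneg (by linarith) ha0.le) hcrP
      rw [hPQ] at hkey2
      have hm' : e = (mg3 P (V (i+1)) : ℤ) := by
        rw [mg3_eq]
        have hda : (d * a) ≠ 0 := ne_of_gt (mul_pos (by linarith) ha0)
        apply mul_left_cancel₀ hda
        linear_combination -hkey2
      -- new vector equation
      have hvec' : d • V (i+1) = b' • P + e • Q := by
        have ha0' : a ≠ 0 := by linarith
        refine teq ?_ ?_ ?_ <;> simp only [sm1, sm2, sm3, ad1, ad2, ad3]
        · apply mul_left_cancel₀ ha0'; linear_combination r1 - P.1 * hb'a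
        · apply mul_left_cancel₀ ha0'; linear_combination r2 - P.2.1 * hb'a
        · apply mul_left_cancel₀ ha0'; linear_combination r3 - P.2.2 * hb'a
      -- inequalities
      have hb'pos : 0 < b' := by
        by_contra hc
        push_neg at hc
        have h1 : b' * a ≤ 0 := mul_nonpos_of_nonpos_of_nonneg hc ha0.le
        linarith [hb'a]
      have hb'd : b' < d := by
        have h1 : e * b ≤ (a - 1) * (d - 1) :=
          mul_le_mul (by linarith) (by linarith) IH4 (by linarith)
        have h3 : (a - 1) * (d - 1) = a * d - a - d + 1 := by ring
        have h2 : b' * a < d * a := by linarith [hb'a, h1, h3]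
        exact lt_of_mul_lt_mul_right h2 ha0.le
      -- gcd 1 for consecutive vectors
      have hc3 : a • cr (V i) (V (i+1)) = cr (V i) P := by
        refine teq ?_ ?_ ?_ <;> simp only [cr1, cr2, cr3, sm1, sm2, sm3]
        · linear_combination (V i).1 * s2 - (V i).2.1 * s1
        · linear_combination (V i).1 * s3 - (V i).2.2 * s1
        · linear_combination (V i).2.1 * s3 - (V i).2.2 * s2
      have hna : a.natAbs = mg3 P (V i) := by
        rw [IH2]; exact Int.natAbs_natCast _
      have hg1 : gT (cr (V i) (V (i+1))) = 1 := by
        have h5 := congrArg gT hc3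
        rw [gT_smul, gT_swap (V i) P, ← mg3_eq P (V i), ← hna] at h5
        have hpos : 0 < a.natAbs := Int.natAbs_pos.mpr (by linarith)
        have h6 : a.natAbs * gT (cr (V i) (V (i+1))) = a.natAbs * 1 := by
          rw [h5, mul_one]
        exact Nat.eq_of_mul_eq_mul_left hpos h6
      -- beta monotone
      have hbb' : b < b' := by
        rcases Nat.eq_zero_or_pos i with rfl | hpos
        · have hb0 : b = 0 := by rw [hb_def]; rfl
          rw [hb0]; exact hb'pos
        · obtain ⟨_, hbposi, hbprev, haPrev, hstepPrev, hrelPrev, hgPrev⟩ := IH6 hpos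
          set A' := (seqF d E k (i-1)).1 with hA'_def
          set B' := (seqF d E k (i-1)).2 with hB'_def
          obtain ⟨u1, u2, u3⟩ := comps hstepPrev
          simp only [sm1, sm2, sm3, ad1, ad2, ad3] at u1 u2 u3
          have hc2 : a • cr (V (i-1)) (V (i+1)) = (A' + e) • cr (V (i-1)) (V i) := by
            refine teq ?_ ?_ ?_ <;> simp only [cr1, cr2, cr3, sm1, sm2, sm3]
            · linear_combination (V (i-1)).1 * s2 - (V (i-1)).2.1 * s1 -
                ((V (i-1)).1 * u2 - (V (i-1)).2.1 * u1)
            · linear_combination (V (i-1)).1 * s3 - (V (i-1)).2.2 * s1 -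
                ((V (i-1)).1 * u3 - (V (i-1)).2.2 * u1)
            · linear_combination (V (i-1)).2.1 * s3 - (V (i-1)).2.2 * s2 -
                ((V (i-1)).2.1 * u3 - (V (i-1)).2.2 * u2)
          obtain ⟨w1, w2, w3⟩ := comps hc2
          simp only [sm1, sm2, sm3] at w1 w2 w3
          have hdvd2 : a ∣ A' + e := by
            have h7 : a ∣ ((A' + e) • cr (V (i-1)) (V i)).1 :=
              ⟨(cr (V (i-1)) (V (i+1))).1, by rw [sm1, ← w1]⟩
            have h8 : a ∣ ((A' + e) • cr (V (i-1)) (V i)).2.1 :=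
              ⟨(cr (V (i-1)) (V (i+1))).2.1, by rw [sm2, ← w2]⟩
            have h9 : a ∣ ((A' + e) • cr (V (i-1)) (V i)).2.2 :=
              ⟨(cr (V (i-1)) (V (i+1))).2.2, by rw [sm3, ← w3]⟩
            have h10 := dvd_gT h7 h8 h9
            rw [gT_smul, hgPrev, mul_one] at h10
            exact Int.dvd_natAbs.mp h10
          have hca : (A' + e) / a * a = A' + e := Int.ediv_mul_cancel hdvd2
          set c := (A' + e) / a with hc_def
          have hc2' : 2 ≤ c := by
            by_contra hcc
            push_neg at hcc
            have h11 : c * a ≤ 1 * a :=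
              mul_le_mul_of_nonneg_right (by linarith) ha0.le
            linarith [hca, haPrev, he1]
          have hb'' : b' * a = (c * b - B') * a := by
            linear_combination hb'a - b * hca - hrelPrev
          have hb'eq : b' = c * b - B' := mul_right_cancel₀ (by linarith) hb''
          have h12 : (0:ℤ) ≤ (c - 2) * b := mul_nonneg (by linarith) (by linarith)
          linarith [hb'eq, hbprev]
      -- assemble
      refine ⟨hvec', hm', by linarith, hb'pos.le, hb'd, fun _ => ?_⟩
      have head : e < d := by
        rcases Nat.eq_zero_or_pos i with rfl | hpos
        · have : a = d := by rw [ha_def]; rfl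
          linarith [he2]
        · linarith [(IH6 hpos).1, he2]
      exact ⟨head, hb'pos, hbb', he2, he3, by linarith [mul_comm a b', hb'a], hg1⟩
  -- final assembly
  refine ⟨fun i => (seqF d E k i).1, fun i => (seqF d E k i).2, rfl, rfl, ?_, ?_, ?_, ?_⟩
  · simp only [hFk]
  · simp only [hFk]
  · intro i h1 hk
    obtain ⟨m1, m2, m3, m4, m5, m6⟩ := main i hk
    obtain ⟨n1, n2, _⟩ := m6 h1
    exact ⟨m3, n1, n2, m5, m1⟩
  · intro i hik
    rcases Nat.lt_or_ge i k with h | h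
    · have h1 : i + 1 ≤ k := h
      obtain ⟨_, _, _, _, _, m6⟩ := main (i+1) h1
      obtain ⟨_, _, n3, n4, _⟩ := m6 (Nat.le_add_left 1 i)
      simp only [Nat.add_sub_cancel] at n3 n4
      exact ⟨n4, n3⟩
    · have hik' : i = k := le_antisymm hik h
      subst hik'
      obtain ⟨_, _, m3, _, m5, _⟩ := main i le_rfl
      simp only [hFk]
      exact ⟨m3, m5⟩
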